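/- Let A : ℝ → ℝ be continuously differentiable, let IA : ℝ → ℝ be an antiderivative of A (IA′ = A), and let ε ∈ ℝ. Suppose u : ℝ² → ℝ is twice continuously differentiable and satisfies ∂_t u = ∂_x(A(u)∂_x u) + A(u)∂_x u at every point of ℝ². Then for all (t,x) ∈ ℝ²: ∂_t[(e^x + ε)·u(t,x)] + ∂_x[−(e^x + ε)·A(u(t,x))·∂_x u(t,x) − ε·IA(u(t,x))] = 0. (The pair F = (e^x+ε)u, G = −(e^x+ε)Au_x − ε∫A is a conserved vector of the diffusion–convection equation with B = A.) -/

import Mathlib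

/-- Partial derivative with respect to the first (time) variable. -/
noncomputable def pT (f : ℝ → ℝ → ℝ) (t x : ℝ) : ℝ := deriv (fun s => f s x) t

/-- Partial derivative with respect to the second (space) variable. -/
noncomputable def pX (f : ℝ → ℝ → ℝ) (t x : ℝ) : ℝ := deriv (fun y => f t y) x

/-- The pair `F = (e^x + ε) u`, `G = −(e^x + ε) A(u) u_x − ε ∫A` is a conserved vector of
the diffusion–convection equation with `B = A`: `u_t = (A(u) u_x)_x + A(u) u_x`. -/
theorem conserved_vector_BeqA
    (A IA : ℝ → ℝ) (hA : ContDiff ℝ 1 A) (hIA : ∀ w : ℝ, HasDerivAt IA (A w) w)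
    (ε : ℝ)
    (u : ℝ → ℝ → ℝ) (hu : ContDiff ℝ 2 (fun p : ℝ × ℝ => u p.1 p.2))
    (hpde : ∀ t x : ℝ,
      pT u t x = pX (fun t x => A (u t x) * pX u t x) t x + A (u t x) * pX u t x) :
    ∀ t x : ℝ,
      pT (fun t x => (Real.exp x + ε) * u t x) t x
        + pX (fun t x =>
            -((Real.exp x + ε) * A (u t x) * pX u t x) - ε * IA (u t x)) t x = 0 := by
  intro t x
  -- spatial slice is C^2
  have hslice : ContDiff ℝ 2 (fun y => u t y) :=
    hu.comp (contDiff_const.prodMk contDiff_id)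
  have htslice : ContDiff ℝ 2 (fun s => u s x) :=
    hu.comp (contDiff_id.prodMk contDiff_const)
  set w : ℝ → ℝ := deriv (fun y => u t y) with hw
  have hwC : ContDiff ℝ 1 w := by
    have := (contDiff_succ_iff_deriv (n := 1)).mp (by exact_mod_cast hslice)
    exact this.2.2
  have hwx : ∀ y, pX u t y = w y := fun y => rfl
  -- HasDerivAt facts at x
  have h1 : HasDerivAt (fun y => u t y) (w x) x :=
    ((hslice.differentiable (by norm_num)) x).hasDerivAt
  have h2 : HasDerivAt w (deriv w x) x :=
    ((hwC.differentiable one_ne_zero) x).hasDerivAt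
  have hA' : HasDerivAt A (deriv A (u t x)) (u t x) :=
    ((hA.differentiable one_ne_zero) (u t x)).hasDerivAt
  have hAu : HasDerivAt (fun y => A (u t y)) (deriv A (u t x) * w x) x := hA'.comp x h1
  have hIAu : HasDerivAt (fun y => IA (u t y)) (A (u t x) * w x) x :=
    (hIA (u t x)).comp x h1
  have hexp : HasDerivAt (fun y : ℝ => Real.exp y + ε) (Real.exp x) x :=
    (Real.hasDerivAt_exp x).add_const ε
  -- derivative of A(u) * w  (the flux inner part)
  have hflux : HasDerivAt (fun y => A (u t y) * w y)
      (deriv A (u t x) * w x * w x + A (u t x) * deriv w x) x := hAu.mul h2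
  have hQ : pX (fun t x => A (u t x) * pX u t x) t x
      = deriv A (u t x) * w x * w x + A (u t x) * deriv w x := by
    have : (fun y => A (u t y) * pX u t y) = fun y => A (u t y) * w y := rfl
    rw [pX, this, hflux.deriv]
  -- time derivative
  have hTu : HasDerivAt (fun s => u s x) (pT u t x) t :=
    ((htslice.differentiable (by norm_num)) t).hasDerivAt
  have hF : pT (fun t x => (Real.exp x + ε) * u t x) t x = (Real.exp x + ε) * pT u t x := by
    rw [pT]; exact (hTu.const_mul (Real.exp x + ε)).deriv
  -- space derivative of G
  have hG : HasDerivAt (fun y => -((Real.exp y + ε) * A (u t y) * pX u t y) - ε * IA (u t y))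
      (-(Real.exp x * A (u t x) * w x
          + (Real.exp x + ε) * (deriv A (u t x) * w x * w x + A (u t x) * deriv w x))
        - ε * (A (u t x) * w x)) x := by
    have hprod : HasDerivAt (fun y => (Real.exp y + ε) * A (u t y) * w y)
        (Real.exp x * A (u t x) * w x
          + (Real.exp x + ε) * (deriv A (u t x) * w x * w x + A (u t x) * deriv w x)) x := by
      have := hexp.mul hflux
      simp only [mul_assoc] at this ⊢
      exact this
    exact hprod.neg.sub ((hIAu).const_mul ε)
  have hGx : pX (fun t x =>
      -((Real.exp x + ε) * A (u t x) * pX u t x) - ε * IA (u t x)) t x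
      = -(Real.exp x * A (u t x) * w x
          + (Real.exp x + ε) * (deriv A (u t x) * w x * w x + A (u t x) * deriv w x))
        - ε * (A (u t x) * w x) := by
    rw [pX]; exact hG.deriv
  have hp := hpde t x
  rw [hQ, hwx] at hp
  rw [hF, hGx, hp]; ring
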